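/- With D[A,B,C] as the number of f-derangements of a 2-max partial function with parameters A, B, C on n = A+B+C elements, if A > 0 and B > 0 then D[A,B,C] = (C + A/2)·D[A,B-1,C] + (B-1)·D[A,B-2,C+1] + (A/2)·D[A-2,B-1,C+2]. -/

import Mathlib

/-- Number of permutations avoiding a partial function `f` (an f-derangement):
permutations `g` with `g i ≠ f i` whenever `f i` is defined. -/
def avoidCount {n : ℕ} (f : Fin n → Option (Fin n)) : ℕ :=
  (Finset.univ.filter fun g : Equiv.Perm (Fin n) => ∀ i, f i ≠ some (g i)).card

/-- `f` is a 2-max partial function with parameters `A` (elements sharing their image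
with another element), `B` (elements with a unique image), `C` (elements where `f` is
undefined): every value has at most 2 preimages. -/
def TwoMaxParams {n : ℕ} (f : Fin n → Option (Fin n)) (A B C : ℕ) : Prop :=
  (∀ y : Fin n, (Finset.univ.filter fun i => f i = some y).card ≤ 2) ∧
  A = (Finset.univ.filter fun i : Fin n => f i ≠ none ∧ ∃ j, j ≠ i ∧ f j = f i).card ∧
  B = (Finset.univ.filter fun i : Fin n => f i ≠ none ∧ ∀ j, j ≠ i → f j ≠ f i).card ∧
  C = (Finset.univ.filter fun i : Fin n => f i = none).card

open Finset Equiv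

variable {m n : ℕ}

/-- fiber of a value -/
def fib (f : Fin m → Option (Fin m)) (y : Fin m) : Finset (Fin m) :=
  Finset.univ.filter fun i => f i = some y

def AS (f : Fin m → Option (Fin m)) : Finset (Fin m) :=
  Finset.univ.filter fun i => f i ≠ none ∧ ∃ j, j ≠ i ∧ f j = f i
def BS (f : Fin m → Option (Fin m)) : Finset (Fin m) :=
  Finset.univ.filter fun i => f i ≠ none ∧ ∀ j, j ≠ i → f j ≠ f i
def CS (f : Fin m → Option (Fin m)) : Finset (Fin m) :=
  Finset.univ.filter fun i => f i = none

def Pset (f : Fin m → Option (Fin m)) : Finset (Fin m) :=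
  Finset.univ.filter fun y => (fib f y).card = 2
def Qset (f : Fin m → Option (Fin m)) : Finset (Fin m) :=
  Finset.univ.filter fun y => (fib f y).card = 1
def Rset (f : Fin m → Option (Fin m)) : Finset (Fin m) :=
  Finset.univ.filter fun y => (fib f y).card = 0

lemma twoMax_iff {f : Fin m → Option (Fin m)} {A B C : ℕ} :
    TwoMaxParams f A B C ↔ (∀ y, (fib f y).card ≤ 2) ∧ A = (AS f).card ∧ B = (BS f).card
      ∧ C = (CS f).card := Iff.rfl

lemma mem_fib {f : Fin m → Option (Fin m)} {y i} : i ∈ fib f y ↔ f i = some y := by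
  simp [fib]

lemma mem_AS_iff {f : Fin m → Option (Fin m)} (hmax : ∀ y, (fib f y).card ≤ 2) {i} :
    i ∈ AS f ↔ ∃ y, f i = some y ∧ (fib f y).card = 2 := by
  simp only [AS, mem_filter, mem_univ, true_and]
  constructor
  · rintro ⟨hne, j, hji, hfj⟩
    obtain ⟨y, hy⟩ := Option.ne_none_iff_exists'.mp hne
    refine ⟨y, hy, le_antisymm (hmax y) ?_⟩
    have : ({j, i} : Finset (Fin m)) ⊆ fib f y := by
      intro k hk; rcases Finset.mem_insert.mp hk with rfl | hk
      · exact mem_fib.mpr (hfj.trans hy)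
      · simp at hk; subst hk; exact mem_fib.mpr hy
    calc 2 = ({j, i} : Finset (Fin m)).card := by rw [Finset.card_insert_of_notMem (by simp [hji]), Finset.card_singleton]
    _ ≤ _ := Finset.card_le_card this
  · rintro ⟨y, hy, hcard⟩
    refine ⟨by simp [hy], ?_⟩
    have hi : i ∈ fib f y := mem_fib.mpr hy
    have : ∃ j ∈ fib f y, j ≠ i := by
      by_contra h
      push_neg at h
      have : fib f y ⊆ {i} := fun k hk => Finset.mem_singleton.mpr (h k hk)
      have := Finset.card_le_card this
      simp [hcard] at this
    obtain ⟨j, hj, hji⟩ := this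
    exact ⟨j, hji, (mem_fib.mp hj).trans hy.symm⟩

lemma mem_BS_iff {f : Fin m → Option (Fin m)} {i} :
    i ∈ BS f ↔ ∃ y, f i = some y ∧ (fib f y).card = 1 := by
  simp only [BS, mem_filter, mem_univ, true_and]
  constructor
  · rintro ⟨hne, huniq⟩
    obtain ⟨y, hy⟩ := Option.ne_none_iff_exists'.mp hne
    refine ⟨y, hy, ?_⟩
    have h1 : fib f y = {i} := by
      apply Finset.Subset.antisymm
      · intro k hk
        rw [mem_fib] at hk
        by_contra hne2
        simp only [Finset.mem_singleton] at hne2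
        exact huniq k hne2 (hk.trans hy.symm)
      · intro k hk; simp at hk; subst hk; exact mem_fib.mpr hy
    simp [h1]
  · rintro ⟨y, hy, hcard⟩
    obtain ⟨a, ha⟩ := Finset.card_eq_one.mp hcard
    have hia : i = a := by have := mem_fib.mpr hy; rw [ha] at this; simpa using this
    subst hia
    refine ⟨by simp [hy], fun j hji hfj => ?_⟩
    have : j ∈ fib f y := mem_fib.mpr (hfj.trans hy)
    rw [ha] at this; simp at this; exact hji this

lemma mem_CS_iff {f : Fin m → Option (Fin m)} {i} : i ∈ CS f ↔ f i = none := by simp [CS]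

lemma not_AS_BS {f : Fin m → Option (Fin m)} {i} (h : i ∉ AS f) (h2 : i ∉ BS f) :
    f i = none := by
  by_contra hne
  simp only [AS, BS, mem_filter, mem_univ, true_and] at h h2
  by_cases hsh : ∃ j, j ≠ i ∧ f j = f i
  · exact h ⟨hne, hsh⟩
  · push_neg at hsh
    exact h2 ⟨hne, hsh⟩

lemma fib_eq_filter_AS {f : Fin m → Option (Fin m)} (hmax : ∀ y, (fib f y).card ≤ 2)
    {y} (hy : y ∈ Pset f) : (AS f).filter (fun i => f i = some y) = fib f y := by
  ext i
  simp only [Finset.mem_filter, mem_fib]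
  constructor
  · rintro ⟨_, h⟩; exact h
  · intro h
    refine ⟨(mem_AS_iff hmax).mpr ⟨y, h, ?_⟩, h⟩
    simpa [Pset] using hy

lemma card_AS {f : Fin m → Option (Fin m)} (hmax : ∀ y, (fib f y).card ≤ 2) :
    (AS f).card = 2 * (Pset f).card := by
  have key : ∀ i ∈ AS f, f i ∈ (Pset f).image some := by
    intro i hi
    obtain ⟨y, hy, hc⟩ := (mem_AS_iff hmax).mp hi
    exact Finset.mem_image.mpr ⟨y, by simp [Pset, hc], hy.symm ▸ rfl⟩
  rw [Finset.card_eq_sum_card_fiberwise key,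
    Finset.sum_image (fun x _ y _ h => Option.some.inj h)]
  have h2 : ∀ y ∈ Pset f, ((AS f).filter fun i => f i = some y).card = 2 := by
    intro y hy
    rw [fib_eq_filter_AS hmax hy]
    simpa [Pset] using hy
  rw [Finset.sum_congr rfl h2, Finset.sum_const, smul_eq_mul, mul_comm]

lemma fib_eq_filter_BS {f : Fin m → Option (Fin m)}
    {y} (hy : y ∈ Qset f) : (BS f).filter (fun i => f i = some y) = fib f y := by
  ext i
  simp only [Finset.mem_filter, mem_fib]
  constructor
  · rintro ⟨_, h⟩; exact h
  · intro h
    refine ⟨mem_BS_iff.mpr ⟨y, h, ?_⟩, h⟩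
    simpa [Qset] using hy

lemma card_BS {f : Fin m → Option (Fin m)} :
    (BS f).card = (Qset f).card := by
  have key : ∀ i ∈ BS f, f i ∈ (Qset f).image some := by
    intro i hi
    obtain ⟨y, hy, hc⟩ := mem_BS_iff.mp hi
    exact Finset.mem_image.mpr ⟨y, by simp [Qset, hc], hy.symm ▸ rfl⟩
  rw [Finset.card_eq_sum_card_fiberwise key,
    Finset.sum_image (fun x _ y _ h => Option.some.inj h)]
  have h2 : ∀ y ∈ Qset f, ((BS f).filter fun i => f i = some y).card = 1 := by
    intro y hy
    rw [fib_eq_filter_BS hy]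
    simpa [Qset] using hy
  rw [Finset.sum_congr rfl h2, Finset.sum_const, smul_eq_mul, mul_one]

lemma card_PQR {f : Fin m → Option (Fin m)} (hmax : ∀ y, (fib f y).card ≤ 2) :
    (Pset f).card + (Qset f).card + (Rset f).card = m := by
  classical
  have h1 := Finset.card_filter_add_card_filter_not (s := (Finset.univ : Finset (Fin m)))
    (p := fun y => (fib f y).card = 2)
  have h2 := Finset.card_filter_add_card_filter_not
    (s := (Finset.univ.filter fun y : Fin m => ¬ (fib f y).card = 2))
    (p := fun y => (fib f y).card = 1)
  rw [Finset.filter_filter, Finset.filter_filter] at h2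
  have e1 : Finset.univ.filter (fun y : Fin m => ¬(fib f y).card = 2 ∧ (fib f y).card = 1) = Qset f := by
    ext y; simp only [Finset.mem_filter, Qset, Finset.mem_univ, true_and]; omega
  have e2 : Finset.univ.filter (fun y : Fin m => ¬(fib f y).card = 2 ∧ ¬(fib f y).card = 1) = Rset f := by
    ext y
    simp only [Finset.mem_filter, Rset, Finset.mem_univ, true_and]
    have := hmax y; omega
  rw [e1, e2] at h2
  rw [Finset.card_univ, Fintype.card_fin] at h1
  have hP : (Finset.univ.filter fun y : Fin m => (fib f y).card = 2) = Pset f := rfl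
  rw [hP] at h1
  omega

/-- relabeling positions by σ and values by τ preserves avoidCount -/
lemma avoidCount_relabel (σ τ : Equiv.Perm (Fin m)) (f : Fin m → Option (Fin m)) :
    avoidCount (fun i => (f (σ i)).map τ) = avoidCount f := by
  classical
  unfold avoidCount
  apply Finset.card_bij' (fun g _ => (σ.symm.trans g).trans τ.symm)
    (fun g _ => (σ.trans g).trans τ)
  · intro g hg
    simp only [Finset.mem_filter, Finset.mem_univ, true_and] at hg ⊢
    intro j hcon
    apply hg (σ.symm j)
    simp only [Equiv.trans_apply] at hcon ⊢
    rw [Equiv.apply_symm_apply, hcon]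
    simp
  · intro g hg
    simp only [Finset.mem_filter, Finset.mem_univ, true_and] at hg ⊢
    intro i hcon
    apply hg (σ i)
    simp only [Equiv.trans_apply] at hcon ⊢
    cases hfi : f (σ i) with
    | none => simp [hfi] at hcon
    | some y =>
      simp only [hfi, Option.map_some] at hcon
      have := τ.injective (Option.some.inj hcon)
      rw [this]
  · intro g _
    ext i
    simp
  · intro g _
    ext i
    simp

/-- transport along an equality of sizes -/
def castFun (h : m = n) (f : Fin m → Option (Fin m)) : Fin n → Option (Fin n) :=
  fun i => (f (Fin.cast h.symm i)).map (Fin.cast h)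

lemma avoidCount_castFun (h : m = n) (f : Fin m → Option (Fin m)) :
    avoidCount (castFun h f) = avoidCount f := by
  subst h
  unfold castFun avoidCount
  congr 1
  apply Finset.filter_congr
  intro g _
  simp [Fin.cast_refl]

lemma twoMaxParams_castFun (h : m = n) (f : Fin m → Option (Fin m)) {A B C : ℕ}
    (hf : TwoMaxParams f A B C) : TwoMaxParams (castFun h f) A B C := by
  subst h
  have : castFun rfl f = f := by
    funext i; unfold castFun; simp [Fin.cast_refl]
  rwa [this]

def pmin (s : Finset (Fin m)) (d : Fin m) : Fin m := if h : s.Nonempty then s.min' h else d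
def pmax (s : Finset (Fin m)) (d : Fin m) : Fin m := if h : s.Nonempty then s.max' h else d

lemma pmin_eq {s : Finset (Fin m)} (h : s.Nonempty) (d : Fin m) : pmin s d = s.min' h :=
  dif_pos h
lemma pmax_eq {s : Finset (Fin m)} (h : s.Nonempty) (d : Fin m) : pmax s d = s.max' h :=
  dif_pos h

lemma pmin_mem {s : Finset (Fin m)} (h : s.Nonempty) (d : Fin m) : pmin s d ∈ s := by
  rw [pmin_eq h]; exact s.min'_mem h
lemma pmax_mem {s : Finset (Fin m)} (h : s.Nonempty) (d : Fin m) : pmax s d ∈ s := by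
  rw [pmax_eq h]; exact s.max'_mem h

lemma card_two_nonempty {s : Finset (Fin m)} (h : s.card = 2) : s.Nonempty :=
  Finset.card_pos.mp (by omega)

lemma pmin_ne_pmax {s : Finset (Fin m)} (h : s.card = 2) (d d' : Fin m) :
    pmin s d ≠ pmax s d' := by
  have hne := card_two_nonempty h
  rw [pmin_eq hne, pmax_eq hne]
  exact ne_of_lt (Finset.min'_lt_max'_of_card s (by omega))

lemma mem_card_two {s : Finset (Fin m)} (h : s.card = 2) {x : Fin m} (hx : x ∈ s) (d : Fin m) :
    x = pmin s d ∨ x = pmax s d := by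
  have hne := card_two_nonempty h
  have hsub : ({s.min' hne, s.max' hne} : Finset (Fin m)) ⊆ s := by
    intro z hz
    rcases Finset.mem_insert.mp hz with rfl | hz
    · exact s.min'_mem hne
    · rw [Finset.mem_singleton.mp hz]; exact s.max'_mem hne
  have hcard : s.card ≤ ({s.min' hne, s.max' hne} : Finset (Fin m)).card := by
    rw [Finset.card_insert_of_notMem (by
      simp only [Finset.mem_singleton]
      exact ne_of_lt (Finset.min'_lt_max'_of_card s (by omega))), Finset.card_singleton, h]
  have heqs := Finset.eq_of_subset_of_card_le hsub hcard
  rw [pmin_eq hne, pmax_eq hne]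
  rw [← heqs] at hx
  simpa using hx

def vl (f : Fin m → Option (Fin m)) (i : Fin m) : Fin m := (f i).getD i

lemma vl_AS {f : Fin m → Option (Fin m)} (hmax : ∀ y, (fib f y).card ≤ 2) {i}
    (hi : i ∈ AS f) : f i = some (vl f i) ∧ vl f i ∈ Pset f := by
  obtain ⟨y, hy, hc⟩ := (mem_AS_iff hmax).mp hi
  have : vl f i = y := by simp [vl, hy]
  rw [this]
  exact ⟨hy, by simp [Pset, hc]⟩

lemma vl_BS {f : Fin m → Option (Fin m)} {i}
    (hi : i ∈ BS f) : f i = some (vl f i) ∧ vl f i ∈ Qset f := by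
  obtain ⟨y, hy, hc⟩ := mem_BS_iff.mp hi
  have : vl f i = y := by simp [vl, hy]
  rw [this]
  exact ⟨hy, by simp [Qset, hc]⟩

lemma exists_relabel {f f' : Fin m → Option (Fin m)}
    (hmax : ∀ y, (fib f y).card ≤ 2) (hmax' : ∀ y, (fib f' y).card ≤ 2)
    (hP : (Pset f).card = (Pset f').card) (hQ : (Qset f).card = (Qset f').card)
    (hR : (Rset f).card = (Rset f').card) (hC : (CS f).card = (CS f').card) :
    ∃ (σ τ : Equiv.Perm (Fin m)), ∀ i, f' (σ i) = (f i).map τ := by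
  classical
  set eP := Finset.equivOfCardEq hP with heP
  set eQ := Finset.equivOfCardEq hQ with heQ
  set eR := Finset.equivOfCardEq hR with heR
  set eC := Finset.equivOfCardEq hC with heC
  set tau : Fin m → Fin m := fun y =>
    if h : y ∈ Pset f then (eP ⟨y, h⟩ : Fin m)
    else if h : y ∈ Qset f then (eQ ⟨y, h⟩ : Fin m)
    else if h : y ∈ Rset f then (eR ⟨y, h⟩ : Fin m)
    else y with htau
  -- classification of tau
  have tri : ∀ y : Fin m, y ∈ Pset f ∨ y ∈ Qset f ∨ y ∈ Rset f := by
    intro y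
    have := hmax y
    simp only [Pset, Qset, Rset, Finset.mem_filter, Finset.mem_univ, true_and]
    omega
  have tauP : ∀ y (h : y ∈ Pset f), tau y = (eP ⟨y, h⟩ : Fin m) ∧ tau y ∈ Pset f' := by
    intro y h
    have e1 : tau y = (eP ⟨y, h⟩ : Fin m) := by rw [htau]; simp only [dif_pos h]
    exact ⟨e1, e1 ▸ Finset.coe_mem _⟩
  have disjPQ : ∀ y : Fin m, y ∈ Pset f → y ∈ Qset f → False := by
    intro y h1 h2
    simp only [Pset, Qset, Finset.mem_filter] at h1 h2
    omega
  have disjPR : ∀ y : Fin m, y ∈ Pset f → y ∈ Rset f → False := by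
    intro y h1 h2
    simp only [Pset, Rset, Finset.mem_filter] at h1 h2
    omega
  have disjQR : ∀ y : Fin m, y ∈ Qset f → y ∈ Rset f → False := by
    intro y h1 h2
    simp only [Qset, Rset, Finset.mem_filter] at h1 h2
    omega
  have tauQ : ∀ y (h : y ∈ Qset f), tau y = (eQ ⟨y, h⟩ : Fin m) ∧ tau y ∈ Qset f' := by
    intro y h
    have e1 : tau y = (eQ ⟨y, h⟩ : Fin m) := by
      rw [htau]; simp only [dif_neg (fun h' => disjPQ y h' h), dif_pos h]
    exact ⟨e1, e1 ▸ Finset.coe_mem _⟩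
  have tauR : ∀ y (h : y ∈ Rset f), tau y = (eR ⟨y, h⟩ : Fin m) ∧ tau y ∈ Rset f' := by
    intro y h
    have e1 : tau y = (eR ⟨y, h⟩ : Fin m) := by
      rw [htau]; simp only [dif_neg (fun h' => disjPR y h' h), dif_neg (fun h' => disjQR y h' h), dif_pos h]
    exact ⟨e1, e1 ▸ Finset.coe_mem _⟩
  have disjPQ' : ∀ y : Fin m, y ∈ Pset f' → y ∈ Qset f' → False := by
    intro y h1 h2
    simp only [Pset, Qset, Finset.mem_filter] at h1 h2
    omega
  have disjPR' : ∀ y : Fin m, y ∈ Pset f' → y ∈ Rset f' → False := by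
    intro y h1 h2
    simp only [Pset, Rset, Finset.mem_filter] at h1 h2
    omega
  have disjQR' : ∀ y : Fin m, y ∈ Qset f' → y ∈ Rset f' → False := by
    intro y h1 h2
    simp only [Qset, Rset, Finset.mem_filter] at h1 h2
    omega
  have tauinj : Function.Injective tau := by
    intro y1 y2 heq
    rcases tri y1 with h1 | h1 | h1 <;> rcases tri y2 with h2 | h2 | h2
    · obtain ⟨e1, _⟩ := tauP y1 h1
      obtain ⟨e2, _⟩ := tauP y2 h2
      rw [e1, e2] at heq
      have := eP.injective (Subtype.coe_injective heq)
      exact congrArg Subtype.val this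
    · exact absurd ((tauQ y2 h2).2) (fun hh => disjPQ' _ (heq ▸ (tauP y1 h1).2) hh)
    · exact absurd ((tauR y2 h2).2) (fun hh => disjPR' _ (heq ▸ (tauP y1 h1).2) hh)
    · exact absurd ((tauQ y1 h1).2) (fun hh => disjPQ' _ (heq.symm ▸ (tauP y2 h2).2) hh)
    · obtain ⟨e1, _⟩ := tauQ y1 h1
      obtain ⟨e2, _⟩ := tauQ y2 h2
      rw [e1, e2] at heq
      have := eQ.injective (Subtype.coe_injective heq)
      exact congrArg Subtype.val this
    · exact absurd ((tauR y2 h2).2) (fun hh => disjQR' _ (heq ▸ (tauQ y1 h1).2) hh)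
    · exact absurd ((tauR y1 h1).2) (fun hh => disjPR' _ (heq.symm ▸ (tauP y2 h2).2) hh)
    · exact absurd ((tauR y1 h1).2) (fun hh => disjQR' _ (heq.symm ▸ (tauQ y2 h2).2) hh)
    · obtain ⟨e1, _⟩ := tauR y1 h1
      obtain ⟨e2, _⟩ := tauR y2 h2
      rw [e1, e2] at heq
      have := eR.injective (Subtype.coe_injective heq)
      exact congrArg Subtype.val this
  set sg : Fin m → Fin m := fun i =>
    if hA : i ∈ AS f then
      (if i = pmin (fib f (vl f i)) i then pmin (fib f' (tau (vl f i))) i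
       else pmax (fib f' (tau (vl f i))) i)
    else if hB : i ∈ BS f then pmin (fib f' (tau (vl f i))) i
    else if hc : i ∈ CS f then (eC ⟨i, hc⟩ : Fin m) else i with hsg
  -- key facts
  have keyA : ∀ i (hi : i ∈ AS f), f' (sg i) = some (tau (vl f i)) ∧
      (fib f' (tau (vl f i))).card = 2 := by
    intro i hi
    obtain ⟨hfi, hPmem⟩ := vl_AS hmax hi
    have h2 : (fib f' (tau (vl f i))).card = 2 := by
      have := (tauP _ hPmem).2
      simpa [Pset] using this
    have hne : (fib f' (tau (vl f i))).Nonempty := card_two_nonempty h2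
    rw [hsg]
    simp only [dif_pos hi]
    constructor
    · by_cases hcase : i = pmin (fib f (vl f i)) i
      · rw [if_pos hcase]
        exact mem_fib.mp (pmin_mem hne i)
      · rw [if_neg hcase]
        exact mem_fib.mp (pmax_mem hne i)
    · exact h2
  have keyB : ∀ i (hi : i ∈ BS f), f' (sg i) = some (tau (vl f i)) ∧
      (fib f' (tau (vl f i))).card = 1 := by
    intro i hi
    obtain ⟨hfi, hQmem⟩ := vl_BS hi
    have h1 : (fib f' (tau (vl f i))).card = 1 := by
      have := (tauQ _ hQmem).2
      simpa [Qset] using this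
    have hne : (fib f' (tau (vl f i))).Nonempty := Finset.card_pos.mp (by omega)
    have hAB : i ∉ AS f := by
      intro hcon
      simp only [AS, BS, Finset.mem_filter, Finset.mem_univ, true_and] at hcon hi
      obtain ⟨_, j, hj1, hj2⟩ := hcon
      exact hi.2 j hj1 hj2
    rw [hsg]
    simp only [dif_neg hAB, dif_pos hi]
    exact ⟨mem_fib.mp (pmin_mem hne i), h1⟩
  have keyC : ∀ i, i ∉ AS f → i ∉ BS f → f' (sg i) = none ∧ f i = none := by
    intro i hA hB
    have hc : i ∈ CS f := mem_CS_iff.mpr (not_AS_BS hA hB)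
    rw [hsg]
    simp only [dif_neg hA, dif_neg hB, dif_pos hc]
    have := Finset.coe_mem (eC ⟨i, hc⟩)
    exact ⟨mem_CS_iff.mp this, mem_CS_iff.mp hc⟩
  have key : ∀ i, f' (sg i) = (f i).map tau := by
    intro i
    by_cases hA : i ∈ AS f
    · obtain ⟨hfi, _⟩ := vl_AS hmax hA
      rw [(keyA i hA).1, hfi, Option.map_some]
    · by_cases hB : i ∈ BS f
      · obtain ⟨hfi, _⟩ := vl_BS hB
        rw [(keyB i hB).1, hfi, Option.map_some]
      · obtain ⟨h1, h2⟩ := keyC i hA hB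
        rw [h1, h2, Option.map_none]
  have sginj : Function.Injective sg := by
    intro i1 i2 heq
    by_cases hA1 : i1 ∈ AS f <;> by_cases hA2 : i2 ∈ AS f
    · -- both in AS
      obtain ⟨k1, c1⟩ := keyA i1 hA1
      obtain ⟨k2, c2⟩ := keyA i2 hA2
      have hval : tau (vl f i1) = tau (vl f i2) := by
        have := k1.symm.trans (heq ▸ k2)
        exact Option.some.inj this
      have hv : vl f i1 = vl f i2 := tauinj hval
      obtain ⟨hfi1, hP1⟩ := vl_AS hmax hA1
      obtain ⟨hfi2, hP2⟩ := vl_AS hmax hA2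
      have hcf : (fib f (vl f i1)).card = 2 := by simpa [Pset] using hP1
      have hne : (fib f (vl f i1)).Nonempty := card_two_nonempty hcf
      have hne' : (fib f' (tau (vl f i1))).Nonempty := card_two_nonempty c1
      rw [hsg] at heq
      simp only [dif_pos hA1, dif_pos hA2, ← hv] at heq
      by_cases hc1 : i1 = pmin (fib f (vl f i1)) i1 <;>
        by_cases hc2 : i2 = pmin (fib f (vl f i1)) i2
      · rw [pmin_eq hne] at hc1 hc2
        rw [hc1, hc2]
      · rw [if_pos hc1, if_neg (by rw [pmin_eq hne] at hc2 ⊢; exact hc2)] at heq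
        rw [pmin_eq hne', pmax_eq hne'] at heq
        exact absurd heq (by
          have := pmin_ne_pmax c1 i1 i2
          rw [pmin_eq hne', pmax_eq hne'] at this
          exact this)
      · rw [if_neg (by rw [pmin_eq hne] at hc1 ⊢; exact hc1), if_pos (by
          rw [pmin_eq hne] at hc2 ⊢; exact hc2)] at heq
        rw [pmin_eq hne', pmax_eq hne'] at heq
        exact absurd heq.symm (by
          have := pmin_ne_pmax c1 i2 i1
          rw [pmin_eq hne', pmax_eq hne'] at this
          exact this)
      · -- both are max of fib f (vl f i1)
        have m1 : i1 ∈ fib f (vl f i1) := mem_fib.mpr hfi1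
        have m2 : i2 ∈ fib f (vl f i1) := mem_fib.mpr (hv ▸ hfi2)
        rcases mem_card_two hcf m1 i1 with h | h
        · exact absurd h hc1
        · rcases mem_card_two hcf m2 i2 with h' | h'
          · exact absurd h' hc2
          · rw [pmax_eq hne] at h h'
            rw [h, h']
    · -- i1 ∈ AS, i2 ∉ AS : contradiction via f' classification
      exfalso
      obtain ⟨k1, c1⟩ := keyA i1 hA1
      by_cases hB2 : i2 ∈ BS f
      · obtain ⟨k2, c2⟩ := keyB i2 hB2
        rw [heq, k2] at k1
        have hval := Option.some.inj k1
        rw [hval] at c2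
        omega
      · obtain ⟨k2, _⟩ := keyC i2 hA2 hB2
        rw [heq, k2] at k1
        exact nomatch k1
    · exfalso
      obtain ⟨k2, c2⟩ := keyA i2 hA2
      by_cases hB1 : i1 ∈ BS f
      · obtain ⟨k1, c1⟩ := keyB i1 hB1
        rw [← heq, k1] at k2
        have hval := Option.some.inj k2
        rw [← hval] at c2
        omega
      · obtain ⟨k1, _⟩ := keyC i1 hA1 hB1
        rw [← heq, k1] at k2
        exact nomatch k2
    · by_cases hB1 : i1 ∈ BS f <;> by_cases hB2 : i2 ∈ BS f
      · obtain ⟨k1, c1⟩ := keyB i1 hB1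
        obtain ⟨k2, c2⟩ := keyB i2 hB2
        have hval : tau (vl f i1) = tau (vl f i2) :=
          Option.some.inj (k1.symm.trans (heq ▸ k2))
        have hv : vl f i1 = vl f i2 := tauinj hval
        obtain ⟨hfi1, hQ1⟩ := vl_BS hB1
        obtain ⟨hfi2, _⟩ := vl_BS hB2
        have hcf : (fib f (vl f i1)).card = 1 := by simpa [Qset] using hQ1
        obtain ⟨a, ha⟩ := Finset.card_eq_one.mp hcf
        have m1 : i1 ∈ fib f (vl f i1) := mem_fib.mpr hfi1
        have m2 : i2 ∈ fib f (vl f i1) := mem_fib.mpr (hv ▸ hfi2)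
        rw [ha] at m1 m2
        simp only [Finset.mem_singleton] at m1 m2
        rw [m1, m2]
      · exfalso
        obtain ⟨k1, c1⟩ := keyB i1 hB1
        obtain ⟨k2, _⟩ := keyC i2 hA2 hB2
        rw [heq, k2] at k1
        exact nomatch k1
      · exfalso
        obtain ⟨k2, c2⟩ := keyB i2 hB2
        obtain ⟨k1, _⟩ := keyC i1 hA1 hB1
        rw [← heq, k1] at k2
        exact nomatch k2
      · -- both in CS
        have hc1 : i1 ∈ CS f := mem_CS_iff.mpr (not_AS_BS hA1 hB1)
        have hc2 : i2 ∈ CS f := mem_CS_iff.mpr (not_AS_BS hA2 hB2)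
        rw [hsg] at heq
        simp only [dif_neg hA1, dif_neg hA2, dif_neg hB1, dif_neg hB2, dif_pos hc1,
          dif_pos hc2] at heq
        have := eC.injective (Subtype.coe_injective heq)
        exact congrArg Subtype.val this
  refine ⟨Equiv.ofBijective sg (Finite.injective_iff_bijective.mp sginj),
    Equiv.ofBijective tau (Finite.injective_iff_bijective.mp tauinj), ?_⟩
  intro i
  exact key i

lemma avoid_invariant {A B C : ℕ} {f f' : Fin m → Option (Fin m)}
    (hf : TwoMaxParams f A B C) (hf' : TwoMaxParams f' A B C) :
    avoidCount f = avoidCount f' := by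
  obtain ⟨hmax, hA, hB, hC⟩ := hf
  obtain ⟨hmax', hA', hB', hC'⟩ := hf'
  have hmaxf : ∀ y, (fib f y).card ≤ 2 := hmax
  have hmaxf' : ∀ y, (fib f' y).card ≤ 2 := hmax'
  have hASc : (AS f).card = (AS f').card := by unfold AS; omega
  have hBSc : (BS f).card = (BS f').card := by unfold BS; omega
  have hCSc : (CS f).card = (CS f').card := by unfold CS; omega
  have hPc : (Pset f).card = (Pset f').card := by
    have h1 := card_AS hmaxf
    have h2 := card_AS hmaxf'
    omega
  have hQc : (Qset f).card = (Qset f').card := by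
    have h1 := card_BS (f := f)
    have h2 := card_BS (f := f')
    omega
  have hRc : (Rset f).card = (Rset f').card := by
    have h1 := card_PQR hmaxf
    have h2 := card_PQR hmaxf'
    omega
  obtain ⟨σ, τ, hkey⟩ := exists_relabel hmaxf hmaxf' hPc hQc hRc hCSc
  have h1 : avoidCount (fun i => (f' (σ i)).map (Equiv.refl (Fin m))) = avoidCount f' :=
    avoidCount_relabel σ (Equiv.refl (Fin m)) f'
  have h2 : avoidCount (fun i => (f (Equiv.refl (Fin m) i)).map τ) = avoidCount f :=
    avoidCount_relabel (Equiv.refl (Fin m)) τ f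
  have h3 : (fun i => (f' (σ i)).map (Equiv.refl (Fin m))) =
      (fun i => (f (Equiv.refl (Fin m) i)).map τ) := by
    funext i
    simp only [Equiv.refl_apply, Equiv.coe_refl, Option.map_id, id]
    rw [hkey i]
  rw [← h2, ← h3, h1]


def reduce (f : Fin (n+1) → Option (Fin (n+1))) (v : Fin (n+1)) : Fin n → Option (Fin n) :=
  fun j => (f j.succ).bind (fun x =>
    if h : Equiv.swap (0 : Fin (n+1)) v x = 0 then none
    else some ((Equiv.swap (0 : Fin (n+1)) v x).pred h))

def theta (v : Fin (n+1)) (z : Fin n) : Fin (n+1) := Equiv.swap (0 : Fin (n+1)) v z.succ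

lemma theta_ne (v : Fin (n+1)) (z : Fin n) : theta v z ≠ v := by
  unfold theta
  intro h
  have := (Equiv.swap (0 : Fin (n+1)) v).injective (h.trans (Equiv.swap_apply_left 0 v).symm)
  exact (Fin.succ_ne_zero z) this

lemma theta_inj (v : Fin (n+1)) : Function.Injective (theta v) := by
  intro a b h
  exact Fin.succ_injective _ ((Equiv.swap (0 : Fin (n+1)) v).injective h)

lemma theta_surj (v : Fin (n+1)) {y : Fin (n+1)} (hy : y ≠ v) : ∃ z, theta v z = y := by
  have h0 : Equiv.swap (0 : Fin (n+1)) v y ≠ 0 := by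
    intro h
    have := (Equiv.swap (0 : Fin (n+1)) v).injective (h.trans (Equiv.swap_apply_right 0 v).symm)
    exact hy this
  refine ⟨(Equiv.swap (0 : Fin (n+1)) v y).pred h0, ?_⟩
  unfold theta
  rw [Fin.succ_pred]
  exact Equiv.swap_apply_self _ _ _

lemma reduce_eq_some {f : Fin (n+1) → Option (Fin (n+1))} {v : Fin (n+1)} {j : Fin n}
    {z : Fin n} : reduce f v j = some z ↔ f j.succ = some (theta v z) := by
  unfold reduce theta
  cases hx : f j.succ with
  | none => simp
  | some x =>
    simp only [Option.bind_some]
    constructor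
    · intro h
      by_cases h0 : Equiv.swap (0 : Fin (n+1)) v x = 0
      · rw [dif_pos h0] at h; exact absurd h (by simp)
      · rw [dif_neg h0] at h
        have hz := Option.some.inj h
        congr 1
        have : (Equiv.swap (0 : Fin (n+1)) v x).pred h0 = z := hz
        have h2 : Equiv.swap (0 : Fin (n+1)) v x = z.succ := by
          rw [← this, Fin.succ_pred]
        calc x = Equiv.swap (0 : Fin (n+1)) v (Equiv.swap (0 : Fin (n+1)) v x) :=
            (Equiv.swap_apply_self _ _ _).symm
        _ = Equiv.swap (0 : Fin (n+1)) v z.succ := by rw [h2]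
    · intro h
      have hx2 : x = Equiv.swap (0 : Fin (n+1)) v z.succ := Option.some.inj h
      have h2 : Equiv.swap (0 : Fin (n+1)) v x = z.succ := by
        rw [hx2]; exact Equiv.swap_apply_self _ _ _
      have h0 : Equiv.swap (0 : Fin (n+1)) v x ≠ 0 := by
        rw [h2]; exact Fin.succ_ne_zero z
      rw [dif_neg h0]
      congr 1
      simp [h2, Fin.pred_succ]

lemma reduce_eq_none {f : Fin (n+1) → Option (Fin (n+1))} {v : Fin (n+1)} {j : Fin n} :
    reduce f v j = none ↔ (f j.succ = none ∨ f j.succ = some v) := by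
  unfold reduce
  cases hx : f j.succ with
  | none => simp
  | some x =>
    simp only [Option.bind_some, Option.some.injEq, false_or]
    constructor
    · intro h
      by_cases h0 : Equiv.swap (0 : Fin (n+1)) v x = 0
      · right
        have : x = Equiv.swap (0 : Fin (n+1)) v 0 := by
          calc x = Equiv.swap (0 : Fin (n+1)) v (Equiv.swap (0 : Fin (n+1)) v x) :=
              (Equiv.swap_apply_self _ _ _).symm
          _ = _ := by rw [h0]
        rw [this, Equiv.swap_apply_left]
      · rw [dif_neg h0] at h; exact absurd h (by simp)
    · rintro (h | rfl)
      · exact absurd h (by simp)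
      · rw [dif_pos (by rw [Equiv.swap_apply_right])]

section TEST
variable {n : ℕ}

lemma avoid_cond (f : Fin (n+1) → Option (Fin (n+1))) (y0 : Fin (n+1)) (h0 : f 0 = some y0) :
    avoidCount f = ∑ v : Fin (n+1), if v = y0 then 0 else avoidCount (reduce f v) := by
  classical
  unfold avoidCount
  have hbij : (Finset.univ.filter fun g : Equiv.Perm (Fin (n+1)) => ∀ i, f i ≠ some (g i)).card
      = (Finset.univ.filter fun p : Fin (n+1) × Equiv.Perm (Fin n) =>
          ∀ i, f i ≠ some (Equiv.Perm.decomposeFin.symm p i)).card := by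
    apply Finset.card_equiv Equiv.Perm.decomposeFin
    intro g
    simp only [Finset.mem_filter, Finset.mem_univ, true_and]
    constructor
    · intro h i
      rw [Equiv.symm_apply_apply]
      exact h i
    · intro h i
      have := h i
      rwa [Equiv.symm_apply_apply] at this
  rw [hbij]
  rw [Finset.card_eq_sum_card_fiberwise
    (fun (p : Fin (n+1) × Equiv.Perm (Fin n)) _ => Finset.mem_univ p.1)]
  apply Finset.sum_congr rfl
  intro v _
  by_cases hv : v = y0
  · subst hv
    rw [if_pos rfl]
    convert Finset.card_empty
    rw [Finset.filter_filter, Finset.eq_empty_iff_forall_notMem]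
    rintro ⟨w, e⟩ hmem
    simp only [Finset.mem_filter, Finset.mem_univ, true_and] at hmem
    obtain ⟨hall, hfst⟩ := hmem
    have := hall 0
    rw [Equiv.Perm.decomposeFin_symm_apply_zero] at this
    have hw : w = v := hfst
    subst hw
    exact this h0
  · rw [if_neg hv]
    rw [Finset.filter_filter]
    apply Finset.card_bij (fun (p : Fin (n+1) × Equiv.Perm (Fin n)) _ => p.2)
    · rintro ⟨w, e⟩ hmem
      simp only [Finset.mem_filter, Finset.mem_univ, true_and] at hmem ⊢
      obtain ⟨hall, hfst⟩ := hmem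
      have hw : w = v := hfst
      subst hw
      intro j hcon
      have := hall j.succ
      rw [Equiv.Perm.decomposeFin_symm_apply_succ] at this
      apply this
      have : f j.succ = some (theta w (e j)) := reduce_eq_some.mp hcon
      rw [this]
      rfl
    · rintro ⟨w1, e1⟩ h1 ⟨w2, e2⟩ h2 heq
      simp only [Finset.mem_filter, Finset.mem_univ, true_and] at h1 h2
      simp only at heq
      obtain ⟨_, hf1⟩ := h1
      obtain ⟨_, hf2⟩ := h2
      simp only [Prod.mk.injEq]
      exact ⟨hf1.trans hf2.symm, heq⟩
    · intro e he
      simp only [Finset.mem_filter, Finset.mem_univ, true_and] at he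
      refine ⟨(v, e), ?_, rfl⟩
      simp only [Finset.mem_filter, Finset.mem_univ, true_and, and_true]
      intro i
      induction i using Fin.cases with
      | zero =>
        rw [Equiv.Perm.decomposeFin_symm_apply_zero, h0]
        intro hcon
        exact hv (Option.some.inj hcon).symm
      | succ j =>
        rw [Equiv.Perm.decomposeFin_symm_apply_succ]
        intro hcon
        apply he j
        apply reduce_eq_some.mpr
        rw [hcon]
        rfl
end TEST

section PARAMS
variable {n : ℕ}

lemma card_succ_bij (s : Finset (Fin n)) (t : Finset (Fin (n+1)))
    (h : ∀ j : Fin n, j ∈ s ↔ j.succ ∈ t) (h0 : (0 : Fin (n+1)) ∉ t) : s.card = t.card := by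
  apply Finset.card_bij (fun a _ => a.succ)
  · intro a ha; exact (h a).mp ha
  · intro a _ b _ hab; exact Fin.succ_injective _ hab
  · intro b hb
    have hbne : b ≠ 0 := fun hc => h0 (hc ▸ hb)
    obtain ⟨j, hj⟩ := Fin.exists_succ_eq.mpr hbne
    exact ⟨j, (h j).mpr (hj ▸ hb), hj⟩

variable {f : Fin (n+1) → Option (Fin (n+1))} {v y0 : Fin (n+1)}

lemma fib_reduce_card (z : Fin n) :
    (fib (reduce f v) z).card = ((fib f (theta v z)).erase 0).card := by
  apply card_succ_bij
  · intro j
    simp only [mem_fib, Finset.mem_erase]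
    rw [reduce_eq_some]
    constructor
    · intro h; exact ⟨Fin.succ_ne_zero j, h⟩
    · rintro ⟨_, h⟩; exact h
  · simp

lemma hmax_reduce (hmax : ∀ y, (fib f y).card ≤ 2) :
    ∀ z, (fib (reduce f v) z).card ≤ 2 := by
  intro z
  rw [fib_reduce_card]
  exact le_trans (Finset.card_le_card (Finset.erase_subset _ _)) (hmax _)

lemma fib_y0 (h0 : f 0 = some y0) (hy0 : (fib f y0).card = 1) : fib f y0 = {0} := by
  obtain ⟨a, ha⟩ := Finset.card_eq_one.mp hy0
  have h2 : (0 : Fin (n+1)) ∈ fib f y0 := mem_fib.mpr h0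
  rw [ha] at h2 ⊢
  simp only [Finset.mem_singleton] at h2
  rw [← h2]

lemma zero_mem_fib_iff (h0 : f 0 = some y0) {y : Fin (n+1)} :
    (0 : Fin (n+1)) ∈ fib f y ↔ y = y0 := by
  rw [mem_fib, h0]
  constructor
  · intro h; exact (Option.some.inj h).symm
  · intro h; rw [h]

lemma zero_not_AS (hmax : ∀ y, (fib f y).card ≤ 2) (h0 : f 0 = some y0)
    (hy0 : (fib f y0).card = 1) : (0 : Fin (n+1)) ∉ AS f := by
  intro hc
  obtain ⟨y, hy, hcard⟩ := (mem_AS_iff hmax).mp hc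
  have : y = y0 := (Option.some.inj (h0.symm.trans hy)).symm
  rw [this, hy0] at hcard
  omega

lemma zero_mem_BS (h0 : f 0 = some y0) (hy0 : (fib f y0).card = 1) :
    (0 : Fin (n+1)) ∈ BS f := mem_BS_iff.mpr ⟨y0, h0, hy0⟩

lemma zero_not_CS (h0 : f 0 = some y0) : (0 : Fin (n+1)) ∉ CS f := by
  rw [mem_CS_iff, h0]; simp

/-- membership transfer: AS -/
lemma mem_AS_reduce (hmax : ∀ y, (fib f y).card ≤ 2) (h0 : f 0 = some y0)
    (hy0 : (fib f y0).card = 1) (hv : v ≠ y0) {j : Fin n} :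
    j ∈ AS (reduce f v) ↔ (j.succ ∈ AS f ∧ f j.succ ≠ some v) := by
  rw [mem_AS_iff (hmax_reduce hmax), mem_AS_iff hmax]
  constructor
  · rintro ⟨z, hz, hc⟩
    have hfz : f j.succ = some (theta v z) := reduce_eq_some.mp hz
    rw [fib_reduce_card] at hc
    have hc2 : (fib f (theta v z)).card = 2 := by
      have h1 : ((fib f (theta v z)).erase 0).card ≤ (fib f (theta v z)).card :=
        Finset.card_le_card (Finset.erase_subset _ _)
      have := hmax (theta v z)
      omega
    refine ⟨⟨theta v z, hfz, hc2⟩, ?_⟩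
    rw [hfz]
    intro hcon
    exact theta_ne v z (Option.some.inj hcon)
  · rintro ⟨⟨y, hy, hc2⟩, hne⟩
    have hyv : y ≠ v := by rintro rfl; exact hne hy
    obtain ⟨z, hz⟩ := theta_surj v hyv
    have hyy0 : y ≠ y0 := by rintro rfl; omega
    have h0nf : (0 : Fin (n+1)) ∉ fib f y := fun hc => hyy0 ((zero_mem_fib_iff h0).mp hc)
    refine ⟨z, reduce_eq_some.mpr (hz ▸ hy), ?_⟩
    rw [fib_reduce_card, hz, Finset.erase_eq_of_notMem h0nf, hc2]
  
/-- membership transfer: BS -/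
lemma mem_BS_reduce (hmax : ∀ y, (fib f y).card ≤ 2) (h0 : f 0 = some y0)
    (hy0 : (fib f y0).card = 1) (hv : v ≠ y0) {j : Fin n} :
    j ∈ BS (reduce f v) ↔ (j.succ ∈ BS f ∧ f j.succ ≠ some v) := by
  rw [mem_BS_iff, mem_BS_iff]
  constructor
  · rintro ⟨z, hz, hc⟩
    have hfz : f j.succ = some (theta v z) := reduce_eq_some.mp hz
    rw [fib_reduce_card] at hc
    have hzy0 : theta v z ≠ y0 := by
      intro hcon
      rw [hcon, fib_y0 h0 hy0] at hc
      simp at hc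
    have h0nf : (0 : Fin (n+1)) ∉ fib f (theta v z) :=
      fun hcc => hzy0 ((zero_mem_fib_iff h0).mp hcc)
    rw [Finset.erase_eq_of_notMem h0nf] at hc
    refine ⟨⟨theta v z, hfz, hc⟩, ?_⟩
    rw [hfz]
    intro hcon
    exact theta_ne v z (Option.some.inj hcon)
  · rintro ⟨⟨y, hy, hc1⟩, hne⟩
    have hyv : y ≠ v := by rintro rfl; exact hne hy
    obtain ⟨z, hz⟩ := theta_surj v hyv
    have hyy0 : y ≠ y0 := by
      intro hcon
      have hmem : j.succ ∈ fib f y0 := mem_fib.mpr (hcon ▸ hy)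
      rw [fib_y0 h0 hy0] at hmem
      simp only [Finset.mem_singleton] at hmem
      exact Fin.succ_ne_zero j hmem
    have h0nf : (0 : Fin (n+1)) ∉ fib f y := fun hc => hyy0 ((zero_mem_fib_iff h0).mp hc)
    refine ⟨z, reduce_eq_some.mpr (hz ▸ hy), ?_⟩
    rw [fib_reduce_card, hz, Finset.erase_eq_of_notMem h0nf, hc1]

lemma mem_CS_reduce {j : Fin n} :
    j ∈ CS (reduce f v) ↔ (j.succ ∈ CS f ∨ f j.succ = some v) := by
  rw [mem_CS_iff, mem_CS_iff, reduce_eq_none]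

end PARAMS

section CASES
variable {n : ℕ} {f : Fin (n+1) → Option (Fin (n+1))} {v y0 : Fin (n+1)} {A B C : ℕ}

/-- Case R : v not in the image -/
lemma params_reduce_R (hf : TwoMaxParams f A B C) (h0 : f 0 = some y0)
    (hy0 : (fib f y0).card = 1) (hv : v ≠ y0) (hcv : (fib f v).card = 0) :
    TwoMaxParams (reduce f v) A (B - 1) C := by
  obtain ⟨hmax, hA, hB, hC⟩ := twoMax_iff.mp hf
  have hfibv : fib f v = ∅ := Finset.card_eq_zero.mp hcv
  have hnv : ∀ i, f i ≠ some v := by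
    intro i hcon
    have : i ∈ fib f v := mem_fib.mpr hcon
    rw [hfibv] at this; exact absurd this (Finset.notMem_empty i)
  refine twoMax_iff.mpr ⟨hmax_reduce hmax, ?_, ?_, ?_⟩
  · rw [hA]
    refine (card_succ_bij _ _ ?_ ?_).symm
    · intro j
      rw [mem_AS_reduce hmax h0 hy0 hv]
      exact ⟨fun h => h.1, fun h => ⟨h, hnv _⟩⟩
    · exact zero_not_AS hmax h0 hy0
  · rw [hB]
    have : B - 1 = ((BS f).erase 0).card := by
      rw [Finset.card_erase_of_mem (zero_mem_BS h0 hy0), ← hB]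
    rw [← hB, this]
    refine (card_succ_bij _ _ ?_ ?_).symm
    · intro j
      rw [mem_BS_reduce hmax h0 hy0 hv, Finset.mem_erase]
      exact ⟨fun h => ⟨Fin.succ_ne_zero j, h.1⟩, fun h => ⟨h.2, hnv _⟩⟩
    · simp
  · rw [hC]
    refine (card_succ_bij _ _ ?_ ?_).symm
    · intro j
      rw [mem_CS_reduce, mem_CS_iff]
      constructor
      · rintro (h | h)
        · exact h
        · exact absurd h (hnv _)
      · exact Or.inl
    · exact zero_not_CS h0

/-- Case Q : v has a unique preimage b' -/
lemma params_reduce_Q (hf : TwoMaxParams f A B C) (h0 : f 0 = some y0)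
    (hy0 : (fib f y0).card = 1) (hv : v ≠ y0) (hcv : (fib f v).card = 1) :
    TwoMaxParams (reduce f v) A (B - 2) (C + 1) := by
  obtain ⟨hmax, hA, hB, hC⟩ := twoMax_iff.mp hf
  obtain ⟨b', hb'⟩ := Finset.card_eq_one.mp hcv
  have hfb' : f b' = some v := by
    have : b' ∈ fib f v := by rw [hb']; simp
    exact mem_fib.mp this
  have hb'0 : b' ≠ 0 := by
    intro hcon
    rw [hcon, h0] at hfb'
    exact hv (Option.some.inj hfb').symm
  have hb'BS : b' ∈ BS f := mem_BS_iff.mpr ⟨v, hfb', hcv⟩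
  have hmemv : ∀ i, f i = some v ↔ i = b' := by
    intro i
    constructor
    · intro h
      have : i ∈ fib f v := mem_fib.mpr h
      rw [hb'] at this; simpa using this
    · rintro rfl; exact hfb'
  refine twoMax_iff.mpr ⟨hmax_reduce hmax, ?_, ?_, ?_⟩
  · rw [hA]
    refine (card_succ_bij _ _ ?_ ?_).symm
    · intro j
      rw [mem_AS_reduce hmax h0 hy0 hv]
      refine ⟨fun h => h.1, fun h => ⟨h, ?_⟩⟩
      intro hcon
      obtain ⟨y, hy, hc2⟩ := (mem_AS_iff hmax).mp h
      have : y = v := Option.some.inj (hy.symm.trans hcon)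
      rw [this, hcv] at hc2
      omega
    · exact zero_not_AS hmax h0 hy0
  · have hcard : B - 2 = (((BS f).erase 0).erase b').card := by
      rw [Finset.card_erase_of_mem (by
        rw [Finset.mem_erase]; exact ⟨hb'0, hb'BS⟩),
        Finset.card_erase_of_mem (zero_mem_BS h0 hy0), ← hB]
      omega
    rw [hcard]
    refine (card_succ_bij _ _ ?_ ?_).symm
    · intro j
      rw [mem_BS_reduce hmax h0 hy0 hv, Finset.mem_erase, Finset.mem_erase]
      constructor
      · rintro ⟨h1, h2⟩
        refine ⟨?_, Fin.succ_ne_zero j, h1⟩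
        intro hcon
        exact h2 (hcon ▸ hfb')
      · rintro ⟨h1, _, h3⟩
        refine ⟨h3, ?_⟩
        intro hcon
        exact h1 ((hmemv _).mp hcon)
    · simp
  · have hcard : C + 1 = (insert b' (CS f)).card := by
      rw [Finset.card_insert_of_notMem (by
        rw [mem_CS_iff, hfb']; simp), ← hC]
    rw [hcard]
    refine (card_succ_bij _ _ ?_ ?_).symm
    · intro j
      rw [mem_CS_reduce, Finset.mem_insert, mem_CS_iff]
      constructor
      · rintro (h | h)
        · exact Or.inr h
        · exact Or.inl ((hmemv _).mp h)
      · rintro (h | h)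
        · exact Or.inr ((hmemv _).mpr h)
        · exact Or.inl h
    · rw [Finset.mem_insert]
      push_neg
      exact ⟨fun hc => hb'0 hc.symm, zero_not_CS h0⟩

/-- Case P : v has two preimages -/
lemma params_reduce_P (hf : TwoMaxParams f A B C) (h0 : f 0 = some y0)
    (hy0 : (fib f y0).card = 1) (hv : v ≠ y0) (hcv : (fib f v).card = 2) :
    TwoMaxParams (reduce f v) (A - 2) (B - 1) (C + 2) := by
  obtain ⟨hmax, hA, hB, hC⟩ := twoMax_iff.mp hf
  have hfsub : fib f v ⊆ AS f := by
    intro i hi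
    exact (mem_AS_iff hmax).mpr ⟨v, mem_fib.mp hi, hcv⟩
  refine twoMax_iff.mpr ⟨hmax_reduce hmax, ?_, ?_, ?_⟩
  · have hcard : A - 2 = (AS f \ fib f v).card := by
      rw [Finset.card_sdiff_of_subset hfsub, hcv, ← hA]
    rw [hcard]
    refine (card_succ_bij _ _ ?_ ?_).symm
    · intro j
      rw [mem_AS_reduce hmax h0 hy0 hv, Finset.mem_sdiff, mem_fib]
    · rw [Finset.mem_sdiff]
      push_neg
      intro hc
      exact absurd hc (zero_not_AS hmax h0 hy0)
  · have hcard : B - 1 = ((BS f).erase 0).card := by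
      rw [Finset.card_erase_of_mem (zero_mem_BS h0 hy0), ← hB]
    rw [hcard]
    refine (card_succ_bij _ _ ?_ ?_).symm
    · intro j
      rw [mem_BS_reduce hmax h0 hy0 hv, Finset.mem_erase]
      constructor
      · rintro ⟨h1, _⟩; exact ⟨Fin.succ_ne_zero j, h1⟩
      · rintro ⟨_, h2⟩
        refine ⟨h2, ?_⟩
        intro hcon
        obtain ⟨y, hy, hc1⟩ := mem_BS_iff.mp h2
        have : y = v := Option.some.inj (hy.symm.trans hcon)
        rw [this, hcv] at hc1
        omega
    · simp
  · have hdisj : Disjoint (CS f) (fib f v) := by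
      rw [Finset.disjoint_left]
      intro i hi hc
      rw [mem_CS_iff] at hi
      rw [mem_fib, hi] at hc
      exact nomatch hc
    have hcard : C + 2 = (CS f ∪ fib f v).card := by
      rw [Finset.card_union_of_disjoint hdisj, hcv, ← hC]
    rw [hcard]
    refine (card_succ_bij _ _ ?_ ?_).symm
    · intro j
      rw [mem_CS_reduce, Finset.mem_union, mem_CS_iff, mem_fib]
    · rw [Finset.mem_union]
      push_neg
      refine ⟨zero_not_CS h0, ?_⟩
      intro hc
      exact hv ((zero_mem_fib_iff h0).mp hc)

end CASES

section COMP
variable {m : ℕ} {f : Fin m → Option (Fin m)} (σ : Equiv.Perm (Fin m))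

lemma mem_AS_comp {i : Fin m} : i ∈ AS (fun j => f (σ j)) ↔ σ i ∈ AS f := by
  simp only [AS, Finset.mem_filter, Finset.mem_univ, true_and]
  constructor
  · rintro ⟨h1, j, hj, hfj⟩
    exact ⟨h1, σ j, fun hc => hj (σ.injective hc), hfj⟩
  · rintro ⟨h1, k, hk, hfk⟩
    refine ⟨h1, σ.symm k, ?_, ?_⟩
    · intro hc
      apply hk
      rw [← hc]
      simp
    · simp [hfk]

lemma mem_BS_comp {i : Fin m} : i ∈ BS (fun j => f (σ j)) ↔ σ i ∈ BS f := by
  simp only [BS, Finset.mem_filter, Finset.mem_univ, true_and]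
  constructor
  · rintro ⟨h1, h2⟩
    refine ⟨h1, fun k hk hfk => ?_⟩
    apply h2 (σ.symm k)
    · intro hc
      apply hk
      rw [← hc]
      simp
    · simp [hfk]
  · rintro ⟨h1, h2⟩
    refine ⟨h1, fun j hj hfj => ?_⟩
    exact h2 (σ j) (fun hc => hj (σ.injective hc)) hfj

lemma mem_CS_comp {i : Fin m} : i ∈ CS (fun j => f (σ j)) ↔ σ i ∈ CS f := by
  simp [CS]

lemma twoMax_comp {A B C : ℕ} (hf : TwoMaxParams f A B C) :
    TwoMaxParams (fun j => f (σ j)) A B C := by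
  obtain ⟨hmax, hA, hB, hC⟩ := twoMax_iff.mp hf
  refine twoMax_iff.mpr ⟨?_, ?_, ?_, ?_⟩
  · intro y
    rw [Finset.card_equiv σ (t := fib f y) (fun i => by simp [fib])]
    exact hmax y
  · rw [hA]
    exact (Finset.card_equiv σ fun i => mem_AS_comp σ).symm
  · rw [hB]
    exact (Finset.card_equiv σ fun i => mem_BS_comp σ).symm
  · rw [hC]
    exact (Finset.card_equiv σ fun i => mem_CS_comp σ).symm

lemma avoid_comp : avoidCount (fun j => f (σ j)) = avoidCount f := by
  have h := avoidCount_relabel σ (Equiv.refl (Fin m)) f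
  rw [← h]
  congr 1
  funext i
  simp

end COMP


/-- Recursion Formula 1: if A, B > 0 then
D[A,B,C] = (C + A/2)·D[A,B-1,C] + (B-1)·D[A,B-2,C+1] + (A/2)·D[A-2,B-1,C+2]. -/
theorem stmt_8 (A B C : ℕ) (hA : 0 < A) (hB : 0 < B)
    (f : Fin (A + B + C) → Option (Fin (A + B + C)))
    (f₁ : Fin (A + (B - 1) + C) → Option (Fin (A + (B - 1) + C)))
    (f₂ : Fin (A + (B - 2) + (C + 1)) → Option (Fin (A + (B - 2) + (C + 1))))
    (f₃ : Fin ((A - 2) + (B - 1) + (C + 2)) → Option (Fin ((A - 2) + (B - 1) + (C + 2))))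
    (hf : TwoMaxParams f A B C)
    (hf₁ : TwoMaxParams f₁ A (B - 1) C)
    (hf₂ : TwoMaxParams f₂ A (B - 2) (C + 1))
    (hf₃ : TwoMaxParams f₃ (A - 2) (B - 1) (C + 2)) :
    avoidCount f = (C + A / 2) * avoidCount f₁ + (B - 1) * avoidCount f₂
      + (A / 2) * avoidCount f₃ := by
  classical
  have hn : A + B + C = (A + (B - 1) + C) + 1 := by omega
  set F : Fin ((A + (B - 1) + C) + 1) → Option (Fin ((A + (B - 1) + C) + 1)) :=
    castFun hn f with hFdef
  have hF : TwoMaxParams F A B C := twoMaxParams_castFun hn f hf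
  have havF : avoidCount F = avoidCount f := avoidCount_castFun hn f
  obtain ⟨hmaxF, hAF, hBF, hCF⟩ := twoMax_iff.mp hF
  have hBne : (BS F).Nonempty := Finset.card_pos.mp (by omega)
  obtain ⟨b, hb⟩ := hBne
  set σ : Equiv.Perm (Fin ((A + (B - 1) + C) + 1)) := Equiv.swap 0 b with hσdef
  set F' : Fin ((A + (B - 1) + C) + 1) → Option (Fin ((A + (B - 1) + C) + 1)) :=
    fun i => F (σ i) with hF'def
  have hF' : TwoMaxParams F' A B C := twoMax_comp σ hF
  have havF' : avoidCount F' = avoidCount F := avoid_comp σ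
  have h0BS : (0 : Fin ((A + (B - 1) + C) + 1)) ∈ BS F' := by
    rw [hF'def, mem_BS_comp σ, hσdef, Equiv.swap_apply_left]
    exact hb
  obtain ⟨y0, h0, hy0⟩ := mem_BS_iff.mp h0BS
  obtain ⟨hmax', hA', hB', hC'⟩ := twoMax_iff.mp hF'
  -- class cards
  have hPc : 2 * (Pset F').card = A := by rw [← card_AS hmax', ← hA']
  have hQc : (Qset F').card = B := by rw [← card_BS, ← hB']
  have hPQR := card_PQR hmax'
  have hy0Q : y0 ∈ Qset F' := by simp [Qset, hy0]
  -- the sum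
  rw [← havF, ← havF', avoid_cond F' y0 h0]
  set t : Fin ((A + (B - 1) + C) + 1) → ℕ :=
    fun v => if v = y0 then 0 else avoidCount (reduce F' v) with htdef
  have hsplit1 := Finset.sum_filter_add_sum_filter_not Finset.univ
    (fun v => (fib F' v).card = 2) t
  have hsplit2 := Finset.sum_filter_add_sum_filter_not
    (Finset.univ.filter (fun v => ¬ (fib F' v).card = 2))
    (fun v => (fib F' v).card = 1) t
  rw [Finset.filter_filter, Finset.filter_filter] at hsplit2
  have e1 : Finset.univ.filter (fun v => ¬(fib F' v).card = 2 ∧ (fib F' v).card = 1) = Qset F' := by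
    ext v
    simp only [Finset.mem_filter, Qset, Finset.mem_univ, true_and]
    omega
  have e2 : Finset.univ.filter (fun v => ¬(fib F' v).card = 2 ∧ ¬(fib F' v).card = 1) = Rset F' := by
    ext v
    simp only [Finset.mem_filter, Rset, Finset.mem_univ, true_and]
    have := hmax' v
    omega
  have e0 : Finset.univ.filter (fun v => (fib F' v).card = 2) = Pset F' := rfl
  rw [e1, e2] at hsplit2
  rw [e0] at hsplit1
  -- term values
  have htP : ∀ v ∈ Pset F', t v = avoidCount f₃ := by
    intro v hv
    have hcv : (fib F' v).card = 2 := by simpa [Pset] using hv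
    have hvy0 : v ≠ y0 := by
      intro hc
      rw [hc, hy0] at hcv
      omega
    have hA2 : 2 ≤ A := by
      have hne : (Pset F').card ≠ 0 := by
        intro hc
        rw [Finset.card_eq_zero.mp hc] at hv
        exact absurd hv (Finset.notMem_empty v)
      omega
    have hparams := params_reduce_P hF' h0 hy0 hvy0 hcv
    have hcast : (A - 2) + (B - 1) + (C + 2) = (A + (B - 1) + C) := by omega
    have hparams3 : TwoMaxParams (castFun hcast f₃) (A - 2) (B - 1) (C + 2) :=
      twoMaxParams_castFun hcast f₃ hf₃
    rw [htdef]
    simp only [if_neg hvy0]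
    rw [avoid_invariant hparams hparams3, avoidCount_castFun]
  have htQ : ∀ v ∈ (Qset F').erase y0, t v = avoidCount f₂ := by
    intro v hv
    rw [Finset.mem_erase] at hv
    obtain ⟨hvy0, hvQ⟩ := hv
    have hcv : (fib F' v).card = 1 := by simpa [Qset] using hvQ
    have hB2 : 2 ≤ B := by
      have : 1 < (Qset F').card := Finset.one_lt_card.mpr ⟨v, hvQ, y0, hy0Q, hvy0⟩
      omega
    have hparams := params_reduce_Q hF' h0 hy0 hvy0 hcv
    have hcast : A + (B - 2) + (C + 1) = (A + (B - 1) + C) := by omega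
    have hparams2 : TwoMaxParams (castFun hcast f₂) A (B - 2) (C + 1) :=
      twoMaxParams_castFun hcast f₂ hf₂
    rw [htdef]
    simp only [if_neg hvy0]
    rw [avoid_invariant hparams hparams2, avoidCount_castFun]
  have htR : ∀ v ∈ Rset F', t v = avoidCount f₁ := by
    intro v hv
    have hcv : (fib F' v).card = 0 := by simpa [Rset] using hv
    have hvy0 : v ≠ y0 := by
      intro hc
      rw [hc, hy0] at hcv
      omega
    have hparams := params_reduce_R hF' h0 hy0 hvy0 hcv
    rw [htdef]
    simp only [if_neg hvy0]
    rw [avoid_invariant hparams hf₁]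
  -- assemble
  have hsumP : ∑ v ∈ Pset F', t v = (Pset F').card * avoidCount f₃ := by
    rw [Finset.sum_congr rfl htP, Finset.sum_const, smul_eq_mul]
  have hsumQ : ∑ v ∈ Qset F', t v = (B - 1) * avoidCount f₂ := by
    rw [← Finset.sum_erase_add _ _ hy0Q]
    have hty0 : t y0 = 0 := by rw [htdef]; simp
    rw [hty0, add_zero, Finset.sum_congr rfl htQ, Finset.sum_const, smul_eq_mul,
      Finset.card_erase_of_mem hy0Q, hQc]
  have hsumR : ∑ v ∈ Rset F', t v = (C + A / 2) * avoidCount f₁ := by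
    rw [Finset.sum_congr rfl htR, Finset.sum_const, smul_eq_mul]
    congr 1
    omega
  have hPhalf : (Pset F').card = A / 2 := by omega
  calc ∑ v : Fin ((A + (B - 1) + C) + 1), t v
      = ∑ v ∈ Pset F', t v + (∑ v ∈ Qset F', t v + ∑ v ∈ Rset F', t v) := by
        rw [hsplit2, hsplit1]
    _ = (C + A / 2) * avoidCount f₁ + (B - 1) * avoidCount f₂
        + (A / 2) * avoidCount f₃ := by
        rw [hsumP, hsumQ, hsumR, hPhalf]
        ring
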